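/- Let Y be a finite T₀-space, let X be a subspace of Y and let A ⊆ X. If A is a dbp–retract of Y, then A is a dbp–retract of X. -/

import Mathlib

open unitInterval

set_option autoImplicit false

universe u v

/-- The specialization preorder: `x ≤ y` iff every open set containing `y` contains `x`. -/
def specLE {X : Type*} [TopologicalSpace X] (x y : X) : Prop :=
  ∀ U : Set X, IsOpen U → y ∈ U → x ∈ U

/-- A continuous map `i : A → X` is a (Hurewicz) cofibration iff it has the homotopy
extension property with respect to all topological spaces. -/
def IsCofibration {A : Type*} {X : Type*} [TopologicalSpace A] [TopologicalSpace X]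
    (i : C(A, X)) : Prop :=
  ∀ (Z : Type v) [TopologicalSpace Z] (f : C(X, Z)) (H : C(A × I, Z)),
    (∀ a, H (a, 0) = f (i a)) →
    ∃ G : C(X × I, Z),
      (∀ x, G (x, 0) = f x) ∧ ∀ a t, G (i a, t) = H (a, t)

/-- `x` is a down beat point of the subspace `S`:
the set of points of `S` strictly below `x` has a maximum. -/
def IsDownBeatPoint {X : Type*} [TopologicalSpace X] (S : Set X) (x : X) : Prop :=
  x ∈ S ∧ ∃ m ∈ S, m ≠ x ∧ specLE m x ∧
    ∀ z ∈ S, z ≠ x → specLE z x → specLE z m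

/-- `T` is a dbp–retract of `S`: `T` is obtained from `S` by successively
removing down beat points. -/
inductive IsDbpRetract {X : Type*} [TopologicalSpace X] : Set X → Set X → Prop
  | refl (S : Set X) : IsDbpRetract S S
  | step {S T : Set X} (x : X) (hx : IsDownBeatPoint S x)
      (h : IsDbpRetract (S \ {x}) T) : IsDbpRetract S T

/-- The minimal open set containing `x` (in a finite space): the intersection of all
open sets containing `x`. -/
def minOpen {X : Type*} [TopologicalSpace X] (x : X) : Set X :=
  ⋂₀ {U : Set X | IsOpen U ∧ x ∈ U}

section Aux

variable {Y : Type u} [TopologicalSpace Y]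

lemma specLE_refl (x : Y) : specLE x x := fun _ _ h => h

lemma specLE_trans {a b c : Y} (h1 : specLE a b) (h2 : specLE b c) : specLE a c :=
  fun U hU hc => h1 U hU (h2 U hU hc)

lemma specLE_iff_specializes {a b : Y} : specLE a b ↔ a ⤳ b := by
  rw [specializes_iff_forall_open]; rfl

lemma specLE_antisymm [T0Space Y] {a b : Y} (h1 : specLE a b) (h2 : specLE b a) : a = b := by
  rw [specLE_iff_specializes] at h1 h2
  exact (h1.antisymm h2).eq

/-- A monotone downward retraction from `S` onto `T`. -/
def DownRetr (S T : Set Y) (r : Y → Y) : Prop :=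
  T ⊆ S ∧ (∀ y ∈ S, r y ∈ T) ∧ (∀ t ∈ T, r t = t) ∧ (∀ y ∈ S, specLE (r y) y) ∧
    (∀ a ∈ S, ∀ b ∈ S, specLE a b → specLE (r a) (r b))

lemma IsDbpRetract.subset {S T : Set Y} (h : IsDbpRetract S T) : T ⊆ S := by
  induction h with
  | refl S => exact subset_rfl
  | step x hx h ih => exact ih.trans Set.diff_subset

lemma IsDbpRetract.exists_downRetr {S T : Set Y} (h : IsDbpRetract S T) :
    ∃ r : Y → Y, DownRetr S T r := by
  induction h with
  | refl S => exact ⟨id, subset_rfl, fun y hy => hy, fun t _ => rfl,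
      fun y _ => specLE_refl y, fun a _ b _ hab => hab⟩
  | @step S T x hx h ih =>
    classical
    obtain ⟨hxS, m, hmS, hmx, hmlex, hmax⟩ := hx
    obtain ⟨r', hTS', hmap', hfix', hle', hmono'⟩ := ih
    have hmS' : m ∈ S \ {x} := ⟨hmS, hmx⟩
    refine ⟨fun y => if y = x then r' m else r' y, hTS'.trans Set.diff_subset,
      ?_, ?_, ?_, ?_⟩
    · intro y hy
      by_cases hyx : y = x
      · simpa [hyx] using hmap' m hmS'
      · simpa [hyx] using hmap' y ⟨hy, hyx⟩
    · intro t ht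
      have htx : t ≠ x := (hTS' ht).2
      simpa [htx] using hfix' t ht
    · intro y hy
      by_cases hyx : y = x
      · subst hyx
        simpa using specLE_trans (hle' m hmS') hmlex
      · simpa [hyx] using hle' y ⟨hy, hyx⟩
    · intro a ha b hb hab
      by_cases hax : a = x <;> by_cases hbx : b = x
      · subst hax; subst hbx; simp [specLE_refl]
      · subst hax
        have hmb : specLE m b := specLE_trans hmlex hab
        simpa [hbx] using hmono' m hmS' b ⟨hb, hbx⟩ hmb
      · subst hbx
        have ham : specLE a m := hmax a ha hax hab
        simpa [hax] using hmono' a ⟨ha, hax⟩ m hmS' ham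
      · simpa [hax, hbx] using hmono' a ⟨ha, hax⟩ b ⟨hb, hbx⟩ hab

lemma downRetr_isDbpRetract [Finite Y] [T0Space Y] :
    ∀ (n : ℕ) (S T : Set Y) (r : Y → Y), (S \ T).ncard ≤ n → DownRetr S T r →
      IsDbpRetract S T := by
  intro n
  induction n with
  | zero =>
    intro S T r hcard hr
    have hfin : (S \ T).Finite := Set.toFinite _
    have hemp : S \ T = ∅ := by
      rw [← Set.ncard_eq_zero hfin]; omega
    have hST : S = T := by
      apply Set.Subset.antisymm _ hr.1
      intro y hy
      by_contra hyT
      have hmem : y ∈ S \ T := ⟨hy, hyT⟩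
      rw [hemp] at hmem
      exact hmem
    rw [hST]; exact IsDbpRetract.refl T
  | succ n ih =>
    intro S T r hcard hr
    obtain ⟨hTS, hmap, hfix, hle, hmono⟩ := hr
    by_cases hemp : (S \ T) = ∅
    · have hST : S = T := by
        apply Set.Subset.antisymm _ hTS
        intro y hy
        by_contra hyT
        have hmem : y ∈ S \ T := ⟨hy, hyT⟩
        rw [hemp] at hmem
        exact hmem
      rw [hST]; exact IsDbpRetract.refl T
    · have hne : (S \ T).Nonempty := Set.nonempty_iff_ne_empty.mpr hemp
      letI : PartialOrder Y := specializationOrder Y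
      have hle_iff : ∀ a b : Y, a ≤ b ↔ specLE b a := fun a b =>
        (specializes_iff_forall_open).trans Iff.rfl
      obtain ⟨x, hxST, hxmin⟩ :=
        Set.Finite.exists_maximalFor id (S \ T) (Set.toFinite _) hne
      have hxS : x ∈ S := hxST.1
      have hxT : x ∉ T := hxST.2
      have hrxT : r x ∈ T := hmap x hxS
      have hrxx : r x ≠ x := fun he => hxT (he ▸ hrxT)
      have hdbp : IsDownBeatPoint S x := by
        refine ⟨hxS, r x, hTS hrxT, hrxx, hle x hxS, ?_⟩
        intro z hzS hzx hzlex
        by_cases hzT : z ∈ T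
        · have := hmono z hzS x hxS hzlex
          rwa [hfix z hzT] at this
        · exfalso
          have := hxmin ⟨hzS, hzT⟩ ((hle_iff x z).mpr hzlex)
          exact hzx (specLE_antisymm hzlex ((hle_iff z x).mp this))
      refine IsDbpRetract.step x hdbp ?_
      have hTSx : T ⊆ S \ {x} := fun t ht => ⟨hTS ht, fun he => hxT (he ▸ ht)⟩
      have hdiff : (S \ {x}) \ T = (S \ T) \ {x} := by
        ext y; simp only [Set.mem_diff, Set.mem_singleton_iff]; tauto
      have hlt : ((S \ {x}) \ T).ncard ≤ n := by
        rw [hdiff]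
        have := Set.ncard_diff_singleton_lt_of_mem hxST (Set.toFinite _)
        omega
      exact ih (S \ {x}) T r hlt ⟨hTSx, fun y hy => hmap y hy.1, hfix,
        fun y hy => hle y hy.1, fun a ha b hb => hmono a ha.1 b hb.1⟩

end Aux

/-- Let `Y` be a finite T₀-space, `X` a subspace of `Y` and `A ⊆ X`.
If `A` is a dbp–retract of `Y`, then `A` is a dbp–retract of `X`. -/
theorem dbpRetract_of_subset_of_dbpRetract_univ
    {Y : Type u} [TopologicalSpace Y] [Finite Y] [T0Space Y]
    (X A : Set Y) (hAX : A ⊆ X)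
    (h : IsDbpRetract (Set.univ : Set Y) A) :
    IsDbpRetract X A := by
  obtain ⟨r, hTS, hmap, hfix, hle, hmono⟩ := h.exists_downRetr
  exact downRetr_isDbpRetract (X \ A).ncard X A r le_rfl
    ⟨hAX, fun y _ => hmap y (Set.mem_univ y), hfix,
      fun y _ => hle y (Set.mem_univ y),
      fun a _ b _ hab => hmono a (Set.mem_univ a) b (Set.mem_univ b) hab⟩
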